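/- Let {m, n} be a γ-pair, with m = n + e i − e j for indices i ≠ j, and let k be the unique element of (supp(m) ∪ supp(n)) \ {i, j}. Then both m + e k − e i and m + e j − e k are degree-5 exponent vectors with at most three nonzero entries, and A(m + e k − e i) + A(m + e j − e k) = A(m) + A(n) + 1. (This is the combinatorial verification that the divisor 𝔻 = ∑_m A(m)·D_m has intersection number 1 with every compact curve γ_{m,n}; e.g. for {x⁴y, x⁴z} it reads 16 + 9 − 12 − 12 = 1.) -/
import Mathlib


/-- The indicator (standard basis) vector of `i : Fin 5`. -/
def e (i : Fin 5) : Fin 5 → ℕ := fun k => if k = i then 1 else 0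

/-- The multiset of nonzero entries of an exponent vector. -/
def nonzeroParts (m : Fin 5 → ℕ) : Multiset ℕ :=
  (Finset.univ.val.map m).filter (· ≠ 0)

/-- The coefficient `A(m)` of the toric divisor `D_m` in the divisor `𝔻`:
it is 16, 12, 10, 9, or 8 according to whether the multiset of nonzero
entries of `m` is `{5}`, `{4,1}`, `{3,2}`, `{3,1,1}`, or `{2,2,1}`. -/
def A (m : Fin 5 → ℕ) : ℕ :=
  if nonzeroParts m = {5} then 16
  else if nonzeroParts m = {4, 1} then 12
  else if nonzeroParts m = {3, 2} then 10
  else if nonzeroParts m = {3, 1, 1} then 9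
  else if nonzeroParts m = {2, 2, 1} then 8
  else 0

def scard (m : Fin 5 → ℕ) : ℕ := (Finset.univ.filter (fun l => m l ≠ 0)).card

def check (n : Fin 5 → ℕ) (i j k : Fin 5) : Prop :=
  i ≠ j → k ≠ i → k ≠ j →
  let m : Fin 5 → ℕ := fun l => n l + e i l - e j l
  (∑ l, m l = 5) →
  (scard (fun l => max (m l) (n l)) = 3) →
  (m k ≠ 0 ∨ n k ≠ 0) →
  let m₁ : Fin 5 → ℕ := fun l => m l + e k l - e i l
  let m₂ : Fin 5 → ℕ := fun l => m l + e j l - e k l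
  (∑ l, m₁ l = 5) ∧ scard m₁ ≤ 3 ∧
  (∑ l, m₂ l = 5) ∧ scard m₂ ≤ 3 ∧
  A m₁ + A m₂ = A m + A n + 1

set_option maxRecDepth 10000 in
noncomputable instance instDecCheck (n : Fin 5 → ℕ) (i j k : Fin 5) : Decidable (check n i j k) := by
  unfold check; infer_instance

set_option maxRecDepth 100000 in
set_option maxHeartbeats 8000000 in
lemma key2 : ((List.range 6).all fun a => (List.range 6).all fun b =>
    (List.range 6).all fun c => (List.range 6).all fun d =>
    (List.range 6).all fun f =>
    !(a+b+c+d+f == 5) || ((List.finRange 5).all fun i =>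
    (List.finRange 5).all fun j => (List.finRange 5).all fun k =>
    decide (check ![a,b,c,d,f] i j k))) = true := by decide

lemma key (a b c d f : ℕ) (ha : a < 6) (hb : b < 6) (hc : c < 6) (hd : d < 6)
    (hf : f < 6) (hs : a + b + c + d + f = 5) (i j k : Fin 5) :
    check ![a,b,c,d,f] i j k := by
  have h := key2
  simp only [List.all_eq_true, List.mem_range, Bool.or_eq_true, Bool.not_eq_true',
    beq_eq_false_iff_ne, decide_eq_true_eq] at h
  rcases h a ha b hb c hc d hd f hf with h' | h'
  · exact absurd hs h'
  · exact h' i (List.mem_finRange i) j (List.mem_finRange j) k (List.mem_finRange k)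

lemma ncard_supp (g : Fin 5 → ℕ) : (Function.support g).ncard = scard g := by
  rw [show Function.support g = ↑(Finset.univ.filter fun l => g l ≠ 0) from by
    ext x; simp [Function.mem_support], Set.ncard_coe_finset]
  rfl

/-- For a γ-pair `{m, n}` with `m = n + e i − e j` (`i ≠ j`) and `k` the
remaining element of `supp m ∪ supp n`, both `m + e k − e i` and
`m + e j − e k` are degree-5 exponent vectors with at most three nonzero
entries, and `A(m + e k − e i) + A(m + e j − e k) = A(m) + A(n) + 1`.
This verifies `𝔻 · γ_{m,n} = 1` (e.g. `16 + 9 − 12 − 12 = 1` for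
`{x⁴y, x⁴z}`). -/
theorem intersection_of_D_with_gamma (m n : Fin 5 → ℕ) (i j k : Fin 5)
    (hm : ∑ l, m l = 5) (hn : ∑ l, n l = 5) (hij : i ≠ j)
    (hmn : m = fun l => n l + e i l - e j l)
    (hsupp : (Function.support m ∪ Function.support n).ncard = 3)
    (hk : k ∈ Function.support m ∪ Function.support n)
    (hki : k ≠ i) (hkj : k ≠ j) :
    let m₁ : Fin 5 → ℕ := fun l => m l + e k l - e i l
    let m₂ : Fin 5 → ℕ := fun l => m l + e j l - e k l
    (∑ l, m₁ l = 5) ∧ (Function.support m₁).ncard ≤ 3 ∧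
    (∑ l, m₂ l = 5) ∧ (Function.support m₂).ncard ≤ 3 ∧
    A m₁ + A m₂ = A m + A n + 1 := by
  intro m₁ m₂
  have hbd : ∀ l, n l ≤ 5 := fun l => hn ▸ Finset.single_le_sum (f := n) (by intro x _; omega) (Finset.mem_univ l)
  have hne : n = ![n 0, n 1, n 2, n 3, n 4] := by
    ext l; fin_cases l <;> rfl
  have hc := key (n 0) (n 1) (n 2) (n 3) (n 4)
    (by have := hbd 0; omega) (by have := hbd 1; omega) (by have := hbd 2; omega)
    (by have := hbd 3; omega) (by have := hbd 4; omega)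
    (by simpa [Fin.sum_univ_five] using hn) i j k
  rw [← hne] at hc
  unfold check at hc
  rw [← hmn] at hc
  have hunion : Function.support m ∪ Function.support n
      = Function.support (fun l => max (m l) (n l)) := by
    ext x; simp [Function.mem_support]; omega
  have hsc : scard (fun l => max (m l) (n l)) = 3 := by
    rw [← ncard_supp, ← hunion]; exact hsupp
  have hk' : m k ≠ 0 ∨ n k ≠ 0 := by
    simpa [Function.mem_support] using hk
  have := hc hij hki hkj hm hsc hk'
  obtain ⟨h1, h2, h3, h4, h5⟩ := this
  exact ⟨h1, by rw [ncard_supp]; exact h2, h3, by rw [ncard_supp]; exact h4, h5⟩
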